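/- Let C₀ > 0 and let u : ℝ² → ℂ be the inverse Fourier transform of the indicator function of the closed disc {ξ ∈ ℝ² : |ξ| ≤ C₀}, i.e. u(x) = (1/4π²)∫_{|ξ| ≤ C₀} e^{−i(x,ξ)} dξ. Then for every σ < 1/2 the weighted integral ∫_{ℝ²} (1+|x|²)^σ |u(x)|² dx is finite; that is, u belongs to the weighted space L²_σ(ℝ²). -/

import Mathlib

open MeasureTheory Real Set intervalIntegral
open scoped Interval
noncomputable section
namespace S9
def ee (r t : ℝ) : ℂ := Complex.exp (-((r * t : ℝ) : ℂ) * Complex.I)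
def FF (r t : ℝ) : ℂ := (Complex.I / r) * ee r t
def gg (C₀ t : ℝ) : ℝ := 2 * Real.sqrt (C₀ ^ 2 - t ^ 2)
def gg' (C₀ t : ℝ) : ℝ := -2 * t / Real.sqrt (C₀ ^ 2 - t ^ 2)
def gg'' (C₀ t : ℝ) : ℝ :=
  ((-2) * Real.sqrt (C₀ ^ 2 - t ^ 2) - (-2 * t) * (-t / Real.sqrt (C₀ ^ 2 - t ^ 2))) /
    (Real.sqrt (C₀ ^ 2 - t ^ 2)) ^ 2

lemma norm_ee (r t : ℝ) : ‖ee r t‖ = 1 := by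
  have h : -((r * t : ℝ) : ℂ) * Complex.I = ((-(r*t) : ℝ) : ℂ) * Complex.I := by push_cast; ring
  rw [ee, h, Complex.norm_exp_ofReal_mul_I]

lemma norm_FF {r : ℝ} (hr : 0 < r) (t : ℝ) : ‖FF r t‖ = 1 / r := by
  rw [FF, norm_mul, norm_ee, norm_div, Complex.norm_I]
  simp [abs_of_pos hr, Complex.norm_real]

lemma continuous_ee (r : ℝ) : Continuous (ee r) := by
  unfold ee; fun_prop

lemma hasDerivAt_ee (r t : ℝ) : HasDerivAt (ee r) (-(r:ℂ) * Complex.I * ee r t) t := by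
  have h1 : HasDerivAt (fun t : ℝ => ((r * t : ℝ) : ℂ)) (r : ℂ) t := by
    have : HasDerivAt (fun t : ℝ => r * t) r t := by
      simpa using (hasDerivAt_id t).const_mul r
    exact this.ofReal_comp
  have h2 : HasDerivAt (fun t : ℝ => -((r * t : ℝ) : ℂ) * Complex.I) (-(r:ℂ) * Complex.I) t :=
    (h1.neg).mul_const Complex.I
  have h3 : HasDerivAt (ee r) (ee r t * (-(r:ℂ) * Complex.I)) t := h2.cexp
  convert h3 using 1; ring

lemma hasDerivAt_FF {r : ℝ} (hr : r ≠ 0) (t : ℝ) : HasDerivAt (FF r) (ee r t) t := by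
  have h := (hasDerivAt_ee r t).const_mul (Complex.I / r)
  have hrc : (r:ℂ) ≠ 0 := by exact_mod_cast hr
  have hval : Complex.I / r * (-(r:ℂ) * Complex.I * ee r t) = ee r t := by
    field_simp
    linear_combination (-ee r t) * Complex.I_sq
  rw [hval] at h; exact h

lemma hasDerivAt_sub_sq (C₀ t : ℝ) : HasDerivAt (fun t : ℝ => C₀ ^ 2 - t ^ 2) (-2 * t) t := by
  simpa using ((hasDerivAt_pow 2 t).const_sub (C₀ ^ 2))

lemma hasDerivAt_sqrt_sub {C₀ t : ℝ} (h : 0 < C₀ ^ 2 - t ^ 2) :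
    HasDerivAt (fun t : ℝ => Real.sqrt (C₀ ^ 2 - t ^ 2)) (-t / Real.sqrt (C₀ ^ 2 - t ^ 2)) t := by
  have h1 := (Real.hasDerivAt_sqrt (ne_of_gt h)).comp t (hasDerivAt_sub_sq C₀ t)
  refine h1.congr_deriv ?_
  field_simp

lemma hasDerivAt_gg {C₀ t : ℝ} (h : 0 < C₀ ^ 2 - t ^ 2) :
    HasDerivAt (gg C₀) (gg' C₀ t) t := by
  have h2 := (hasDerivAt_sqrt_sub h).const_mul 2
  refine h2.congr_deriv ?_
  unfold gg'; field_simp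

lemma hasDerivAt_gg' {C₀ t : ℝ} (h : 0 < C₀ ^ 2 - t ^ 2) :
    HasDerivAt (gg' C₀) (gg'' C₀ t) t := by
  have hs : Real.sqrt (C₀ ^ 2 - t ^ 2) ≠ 0 := by positivity
  have h1 : HasDerivAt (fun t : ℝ => -2 * t) (-2) t := by
    simpa using (hasDerivAt_id t).const_mul (-2 : ℝ)
  exact h1.div (hasDerivAt_sqrt_sub h) hs

lemma gg''_nonpos {C₀ t : ℝ} (h : 0 < C₀ ^ 2 - t ^ 2) : gg'' C₀ t ≤ 0 := by
  have hs : 0 < Real.sqrt (C₀ ^ 2 - t ^ 2) := Real.sqrt_pos.2 h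
  apply div_nonpos_iff.2
  right
  constructor
  · have h2 : 0 ≤ t ^ 2 / Real.sqrt (C₀ ^ 2 - t ^ 2) := by positivity
    have he : (-2 * t) * (-t / Real.sqrt (C₀ ^ 2 - t ^ 2)) =
        2 * (t ^ 2 / Real.sqrt (C₀ ^ 2 - t ^ 2)) := by ring
    rw [he]; nlinarith
  · positivity



lemma middle_bound {C₀ r a : ℝ} (hr : 0 < r) (ha : 0 ≤ a) (haC : a < C₀) :
    ‖∫ t in (-a)..a, ee r t * (gg C₀ t : ℂ)‖ ≤
      2 * gg C₀ a / r + 8 * a / (Real.sqrt (C₀ ^ 2 - a ^ 2) * r ^ 2) := by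
  have hC₀ : 0 < C₀ := lt_of_le_of_lt ha haC
  have huIcc : [[-a, a]] = Icc (-a) a := uIcc_of_le (by linarith)
  have hmem : ∀ t ∈ [[-a, a]], 0 < C₀ ^ 2 - t ^ 2 := by
    intro t ht
    rw [huIcc, mem_Icc] at ht
    nlinarith [ht.1, ht.2]
  have hw : 0 < Real.sqrt (C₀ ^ 2 - a ^ 2) := Real.sqrt_pos.2 (by nlinarith)
  set w := Real.sqrt (C₀ ^ 2 - a ^ 2) with hw_def
  -- continuity facts
  have hsq : ContinuousOn (fun t : ℝ => Real.sqrt (C₀ ^ 2 - t ^ 2)) [[-a, a]] :=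
    (Real.continuous_sqrt.comp (by fun_prop)).continuousOn
  have hg'c : ContinuousOn (fun t => (gg' C₀ t : ℂ)) [[-a, a]] := by
    apply Complex.continuous_ofReal.comp_continuousOn
    exact ContinuousOn.div (by fun_prop) hsq (fun t ht => (Real.sqrt_pos.2 (hmem t ht)).ne')
  have hg''c : ContinuousOn (fun t => (gg'' C₀ t : ℂ)) [[-a, a]] := by
    apply Complex.continuous_ofReal.comp_continuousOn
    apply ContinuousOn.div
    · apply ContinuousOn.sub (continuousOn_const.mul hsq)
      exact ContinuousOn.mul (by fun_prop)
        (ContinuousOn.div (by fun_prop) hsq (fun t ht => (Real.sqrt_pos.2 (hmem t ht)).ne'))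
    · exact hsq.pow 2
    · intro t ht
      exact pow_ne_zero 2 (Real.sqrt_pos.2 (hmem t ht)).ne'
  have hg''r : ContinuousOn (fun t => gg'' C₀ t) [[-a, a]] :=
    Complex.continuous_re.comp_continuousOn hg''c
  -- first integration by parts
  have ibp1 : (∫ t in (-a)..a, (gg C₀ t : ℂ) * ee r t)
      = (gg C₀ a : ℂ) * FF r a - (gg C₀ (-a) : ℂ) * FF r (-a)
        - ∫ t in (-a)..a, (gg' C₀ t : ℂ) * FF r t := by
    apply intervalIntegral.integral_mul_deriv_eq_deriv_mul
    · exact fun t ht => (hasDerivAt_gg (hmem t ht)).ofReal_comp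
    · exact fun t _ => hasDerivAt_FF hr.ne' t
    · exact hg'c.intervalIntegrable
    · exact (continuous_ee r).intervalIntegrable _ _
  -- reduce FF to ee
  have hred : (∫ t in (-a)..a, (gg' C₀ t : ℂ) * FF r t)
      = (Complex.I / r) * ∫ t in (-a)..a, (gg' C₀ t : ℂ) * ee r t := by
    rw [← intervalIntegral.integral_const_mul]
    apply intervalIntegral.integral_congr
    intro t _
    simp only [FF]; ring
  -- second integration by parts
  have ibp2 : (∫ t in (-a)..a, (gg' C₀ t : ℂ) * ee r t)
      = (gg' C₀ a : ℂ) * FF r a - (gg' C₀ (-a) : ℂ) * FF r (-a)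
        - ∫ t in (-a)..a, (gg'' C₀ t : ℂ) * FF r t := by
    apply intervalIntegral.integral_mul_deriv_eq_deriv_mul
    · exact fun t ht => (hasDerivAt_gg' (hmem t ht)).ofReal_comp
    · exact fun t _ => hasDerivAt_FF hr.ne' t
    · exact hg''c.intervalIntegrable
    · exact (continuous_ee r).intervalIntegrable _ _
  -- bound on the gg'' term
  have hgg''int : (∫ t in (-a)..a, gg'' C₀ t) = gg' C₀ a - gg' C₀ (-a) :=
    intervalIntegral.integral_eq_sub_of_hasDerivAt
      (fun t ht => hasDerivAt_gg' (hmem t ht)) hg''r.intervalIntegrable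
  have hbound3 : ‖∫ t in (-a)..a, (gg'' C₀ t : ℂ) * FF r t‖
      ≤ (gg' C₀ (-a) - gg' C₀ a) / r := by
    have h1 : ‖∫ t in (-a)..a, (gg'' C₀ t : ℂ) * FF r t‖
        ≤ ∫ t in (-a)..a, ‖(gg'' C₀ t : ℂ) * FF r t‖ :=
      intervalIntegral.norm_integral_le_integral_norm (by linarith)
    have h2 : (∫ t in (-a)..a, ‖(gg'' C₀ t : ℂ) * FF r t‖)
        = ∫ t in (-a)..a, (-gg'' C₀ t) * (1 / r) := by
      apply intervalIntegral.integral_congr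
      intro t ht
      show ‖(gg'' C₀ t : ℂ) * FF r t‖ = -gg'' C₀ t * (1 / r)
      rw [norm_mul, norm_FF hr, Complex.norm_real, Real.norm_eq_abs,
        abs_of_nonpos (gg''_nonpos (hmem t ht))]
    rw [h2] at h1
    calc ‖∫ t in (-a)..a, (gg'' C₀ t : ℂ) * FF r t‖
        ≤ ∫ t in (-a)..a, (-gg'' C₀ t) * (1 / r) := h1
      _ = (gg' C₀ (-a) - gg' C₀ a) / r := by
          rw [intervalIntegral.integral_mul_const, intervalIntegral.integral_neg, hgg''int]
          ring
  -- norms of boundary terms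
  have hFFa : ‖FF r a‖ = 1 / r := norm_FF hr a
  have hFFna : ‖FF r (-a)‖ = 1 / r := norm_FF hr (-a)
  have hga' : gg' C₀ a = -2 * a / w := by rw [gg']
  have hgna' : gg' C₀ (-a) = 2 * a / w := by rw [gg', neg_sq]; ring
  have hggna : gg C₀ (-a) = gg C₀ a := by rw [gg, gg, neg_sq]
  have hgga_nonneg : 0 ≤ gg C₀ a := by rw [gg]; positivity
  have habs : |gg' C₀ a| = 2 * a / w := by
    have hle : -2 * a / w ≤ 0 := div_nonpos_iff.2 (Or.inr ⟨by linarith, hw.le⟩)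
    rw [hga', abs_of_nonpos hle]; ring
  have habsn : |gg' C₀ (-a)| = 2 * a / w := by
    rw [hgna', abs_of_nonneg (by positivity)]
  have hb0a : ‖(gg C₀ a : ℂ) * FF r a‖ = gg C₀ a / r := by
    rw [norm_mul, hFFa, Complex.norm_real, Real.norm_eq_abs, abs_of_nonneg hgga_nonneg]; ring
  have hb0na : ‖(gg C₀ (-a) : ℂ) * FF r (-a)‖ = gg C₀ a / r := by
    rw [norm_mul, hFFna, Complex.norm_real, Real.norm_eq_abs, hggna,
      abs_of_nonneg hgga_nonneg]; ring
  have hb1a : ‖(gg' C₀ a : ℂ) * FF r a‖ = 2 * a / w / r := by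
    rw [norm_mul, hFFa, Complex.norm_real, Real.norm_eq_abs, habs]; ring
  have hb1na : ‖(gg' C₀ (-a) : ℂ) * FF r (-a)‖ = 2 * a / w / r := by
    rw [norm_mul, hFFna, Complex.norm_real, Real.norm_eq_abs, habsn]; ring
  have hdiff : gg' C₀ (-a) - gg' C₀ a = 4 * a / w := by rw [hga', hgna']; ring
  -- assemble
  have e1 : (∫ t in (-a)..a, ee r t * (gg C₀ t : ℂ))
      = ∫ t in (-a)..a, (gg C₀ t : ℂ) * ee r t := by
    apply intervalIntegral.integral_congr; intro t _; ring
  rw [e1, ibp1, hred, ibp2]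
  have hIr : ‖(Complex.I / (r : ℂ))‖ = 1 / r := by
    rw [norm_div, Complex.norm_I, Complex.norm_real, Real.norm_eq_abs, abs_of_pos hr]
  calc ‖(gg C₀ a : ℂ) * FF r a - (gg C₀ (-a) : ℂ) * FF r (-a)
        - (Complex.I / r) * ((gg' C₀ a : ℂ) * FF r a - (gg' C₀ (-a) : ℂ) * FF r (-a)
          - ∫ t in (-a)..a, (gg'' C₀ t : ℂ) * FF r t)‖
      ≤ ‖(gg C₀ a : ℂ) * FF r a‖ + ‖(gg C₀ (-a) : ℂ) * FF r (-a)‖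
        + ‖(Complex.I / (r : ℂ))‖ * ‖(gg' C₀ a : ℂ) * FF r a - (gg' C₀ (-a) : ℂ) * FF r (-a)
          - ∫ t in (-a)..a, (gg'' C₀ t : ℂ) * FF r t‖ := by
        rw [← norm_mul]
        exact le_trans (norm_sub_le _ _) (by gcongr; exact norm_sub_le _ _)
    _ ≤ gg C₀ a / r + gg C₀ a / r
        + (1 / r) * (2 * a / w / r + 2 * a / w / r + (gg' C₀ (-a) - gg' C₀ a) / r) := by
        rw [hb0a, hb0na, hIr]
        gcongr
        calc ‖(gg' C₀ a : ℂ) * FF r a - (gg' C₀ (-a) : ℂ) * FF r (-a)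
              - ∫ t in (-a)..a, (gg'' C₀ t : ℂ) * FF r t‖
            ≤ ‖(gg' C₀ a : ℂ) * FF r a‖ + ‖(gg' C₀ (-a) : ℂ) * FF r (-a)‖
              + ‖∫ t in (-a)..a, (gg'' C₀ t : ℂ) * FF r t‖ :=
              le_trans (norm_sub_le _ _) (by gcongr; exact norm_sub_le _ _)
          _ ≤ 2 * a / w / r + 2 * a / w / r + (gg' C₀ (-a) - gg' C₀ a) / r := by
              rw [hb1a, hb1na]
              gcongr
    _ = 2 * gg C₀ a / r + 8 * a / (w * r ^ 2) := by
        rw [hdiff]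
        field_simp
        try ring

lemma continuous_gg (C₀ : ℝ) : Continuous (gg C₀) := by
  unfold gg
  exact continuous_const.mul (Real.continuous_sqrt.comp (by fun_prop))

lemma intInt (C₀ r p q : ℝ) :
    IntervalIntegrable (fun t => ee r t * (gg C₀ t : ℂ)) volume p q :=
  (Continuous.mul (continuous_ee r) (Complex.continuous_ofReal.comp (continuous_gg C₀))).intervalIntegrable p q

lemma gg_mono {C₀ t s : ℝ} (h : s ^ 2 ≤ t ^ 2) : gg C₀ t ≤ gg C₀ s := by
  unfold gg
  have := Real.sqrt_le_sqrt (show C₀ ^ 2 - t ^ 2 ≤ C₀ ^ 2 - s ^ 2 by linarith)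
  linarith

lemma gg_nonneg (C₀ t : ℝ) : 0 ≤ gg C₀ t := by unfold gg; positivity

lemma trivial_bound {C₀ : ℝ} (hC₀ : 0 < C₀) (r p q : ℝ) (hpq : p ≤ q)
    (hp : -C₀ ≤ p) (hq : q ≤ C₀) :
    ‖∫ t in p..q, ee r t * (gg C₀ t : ℂ)‖ ≤ 2 * C₀ * (q - p) := by
  have h := intervalIntegral.norm_integral_le_of_norm_le_const
    (a := p) (b := q) (C := 2 * C₀) (f := fun t => ee r t * (gg C₀ t : ℂ)) ?_
  · rw [abs_of_nonneg (by linarith)] at h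
    linarith
  · intro t _
    rw [norm_mul, norm_ee, one_mul, Complex.norm_real, Real.norm_eq_abs,
      abs_of_nonneg (gg_nonneg C₀ t)]
    calc gg C₀ t ≤ gg C₀ 0 := gg_mono (by nlinarith [sq_nonneg t])
      _ = 2 * Real.sqrt (C₀ ^ 2) := by unfold gg; norm_num
      _ = 2 * C₀ := by rw [Real.sqrt_sq hC₀.le]

set_option maxHeartbeats 2000000 in
lemma decay_bound {C₀ : ℝ} (hC₀ : 0 < C₀) {r : ℝ} (hr1 : 1 ≤ r) (hr2 : 2 / C₀ ≤ r) :
    ‖∫ t in (-C₀)..C₀, ee r t * (gg C₀ t : ℂ)‖ ≤ 20 * Real.sqrt C₀ / (r * Real.sqrt r) := by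
  have hr0 : 0 < r := by linarith
  set a : ℝ := C₀ - 1 / r with ha_def
  have hinv : 0 < 1 / r := by positivity
  have hinvC : 1 / r ≤ C₀ / 2 := by
    rw [div_le_div_iff₀ hr0 (by norm_num : (0:ℝ) < 2)]
    calc 1 * 2 = 2 := by ring
      _ = (2 / C₀) * C₀ := by field_simp
      _ ≤ r * C₀ := by
          apply mul_le_mul_of_nonneg_right hr2 hC₀.le
      _ = C₀ * r := by ring
  have ha0 : 0 ≤ a := by rw [ha_def]; linarith
  have haC : a < C₀ := by rw [ha_def]; linarith
  -- split the integral
  have hsplit : (∫ t in (-C₀)..C₀, ee r t * (gg C₀ t : ℂ))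
      = (∫ t in (-C₀)..(-a), ee r t * (gg C₀ t : ℂ))
        + (∫ t in (-a)..a, ee r t * (gg C₀ t : ℂ))
        + (∫ t in a..C₀, ee r t * (gg C₀ t : ℂ)) := by
    rw [intervalIntegral.integral_add_adjacent_intervals (intInt C₀ r _ _) (intInt C₀ r _ _),
      intervalIntegral.integral_add_adjacent_intervals (intInt C₀ r _ _) (intInt C₀ r _ _)]
  -- endpoint bounds
  have hend_right : ‖∫ t in a..C₀, ee r t * (gg C₀ t : ℂ)‖ ≤ gg C₀ a * (1 / r) := by
    have h := intervalIntegral.norm_integral_le_of_norm_le_const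
      (a := a) (b := C₀) (C := gg C₀ a) (f := fun t => ee r t * (gg C₀ t : ℂ)) ?_
    · rw [abs_of_nonneg (by linarith)] at h
      calc ‖∫ t in a..C₀, ee r t * (gg C₀ t : ℂ)‖ ≤ gg C₀ a * (C₀ - a) := h
        _ = gg C₀ a * (1 / r) := by rw [ha_def]; ring_nf
    · intro t ht
      rw [Set.uIoc_of_le (le_of_lt haC)] at ht
      rw [norm_mul, norm_ee, one_mul, Complex.norm_real, Real.norm_eq_abs,
        abs_of_nonneg (gg_nonneg C₀ t)]
      exact gg_mono (by nlinarith [ht.1, ht.2])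
  have hend_left : ‖∫ t in (-C₀)..(-a), ee r t * (gg C₀ t : ℂ)‖ ≤ gg C₀ a * (1 / r) := by
    have h := intervalIntegral.norm_integral_le_of_norm_le_const
      (a := -C₀) (b := -a) (C := gg C₀ a) (f := fun t => ee r t * (gg C₀ t : ℂ)) ?_
    · rw [abs_of_nonneg (by linarith)] at h
      calc ‖∫ t in (-C₀)..(-a), ee r t * (gg C₀ t : ℂ)‖ ≤ gg C₀ a * (-a - -C₀) := h
        _ = gg C₀ a * (1 / r) := by rw [ha_def]; ring_nf
    · intro t ht
      rw [Set.uIoc_of_le (by linarith : -C₀ ≤ -a)] at ht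
      rw [norm_mul, norm_ee, one_mul, Complex.norm_real, Real.norm_eq_abs,
        abs_of_nonneg (gg_nonneg C₀ t)]
      exact gg_mono (by nlinarith [ht.1, ht.2])
  -- middle
  have hmid := middle_bound (C₀ := C₀) hr0 ha0 haC
  -- sqrt estimates
  set w := Real.sqrt (C₀ ^ 2 - a ^ 2) with hw_def
  have hwsq : C₀ ^ 2 - a ^ 2 = (1 / r) * (2 * C₀ - 1 / r) := by rw [ha_def]; ring
  have hw_pos : 0 < C₀ ^ 2 - a ^ 2 := by nlinarith
  have hw0 : 0 < w := Real.sqrt_pos.2 hw_pos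
  have hs0 : 0 < Real.sqrt r := Real.sqrt_pos.2 hr0
  set s := Real.sqrt r with hs_def
  have hs2 : s ^ 2 = r := Real.sq_sqrt hr0.le
  have hw_ub : w ≤ Real.sqrt (2 * C₀) / s := by
    rw [hw_def, hs_def, ← Real.sqrt_div (by positivity) r]
    apply Real.sqrt_le_sqrt
    rw [hwsq]
    have e : 2 * C₀ / r - 1 / r * (2 * C₀ - 1 / r) = (1/r)^2 := by field_simp; ring
    nlinarith [sq_nonneg (1/r), e]
  have hw_lb : Real.sqrt C₀ / s ≤ w := by
    rw [hw_def, hs_def, ← Real.sqrt_div hC₀.le r]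
    apply Real.sqrt_le_sqrt
    rw [hwsq]
    have e : 1 / r * (2 * C₀ - 1 / r) - C₀ / r = (1/r) * (C₀ - 1/r) := by field_simp; ring
    have k : 0 ≤ (1/r) * (C₀ - 1/r) := mul_nonneg hinv.le (by linarith)
    linarith [e, k]
  have hgga : gg C₀ a = 2 * w := by rw [gg, hw_def]
  -- collect
  have htotal : ‖∫ t in (-C₀)..C₀, ee r t * (gg C₀ t : ℂ)‖
      ≤ 4 * w / r + 2 * (2 * w) / r + 8 * a / (w * r ^ 2) := by
    rw [hsplit]
    calc ‖_ + _ + _‖ ≤ gg C₀ a * (1/r) + (2 * gg C₀ a / r + 8 * a / (w * r ^ 2))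
          + gg C₀ a * (1/r) := by
          apply le_trans (norm_add₃_le)
          gcongr
      _ = 4 * w / r + 2 * (2 * w) / r + 8 * a / (w * r ^ 2) := by rw [hgga]; ring
  -- numeric conclusion
  have h1 : 4 * w / r + 2 * (2 * w) / r ≤ 8 * (Real.sqrt (2 * C₀) / s) / r := by
    have : 4 * w + 2 * (2 * w) = 8 * w := by ring
    rw [← add_div]
    rw [this]
    gcongr
  have hsqrt2C : Real.sqrt (2 * C₀) = Real.sqrt 2 * Real.sqrt C₀ := Real.sqrt_mul (by norm_num) _
  have hsqrt2 : Real.sqrt 2 ≤ 1.5 := by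
    rw [show (1.5 : ℝ) = Real.sqrt (1.5 ^ 2) from (Real.sqrt_sq (by norm_num)).symm]
    apply Real.sqrt_le_sqrt; norm_num
  have hws : Real.sqrt C₀ ≤ w * s := (div_le_iff₀ hs0).1 hw_lb
  have h2 : 8 * a / (w * r ^ 2) ≤ 8 * Real.sqrt C₀ / (r * s) := by
    rw [div_le_div_iff₀ (by positivity) (by positivity)]
    have key : Real.sqrt C₀ * (r * s) ≤ w * r ^ 2 := by
      calc Real.sqrt C₀ * (r * s) ≤ (w * s) * (r * s) :=
            mul_le_mul_of_nonneg_right hws (by positivity)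
        _ = w * (r * s ^ 2) := by ring
        _ = w * r ^ 2 := by rw [hs2]; ring
    calc 8 * a * (r * s) ≤ 8 * C₀ * (r * s) := by
          have := mul_le_mul_of_nonneg_right (mul_le_mul_of_nonneg_left haC.le
            (by norm_num : (0:ℝ) ≤ 8)) (by positivity : (0:ℝ) ≤ r * s)
          linarith
      _ = 8 * Real.sqrt C₀ * (Real.sqrt C₀ * (r * s)) := by
          have hcc : Real.sqrt C₀ * Real.sqrt C₀ = C₀ := Real.mul_self_sqrt hC₀.le
          linear_combination (-8*(r*s)) * hcc
      _ ≤ 8 * Real.sqrt C₀ * (w * r ^ 2) := by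
          apply mul_le_mul_of_nonneg_left key (by positivity)
  calc ‖∫ t in (-C₀)..C₀, ee r t * (gg C₀ t : ℂ)‖
      ≤ 4 * w / r + 2 * (2 * w) / r + 8 * a / (w * r ^ 2) := htotal
    _ ≤ 8 * (Real.sqrt (2 * C₀) / s) / r + 8 * Real.sqrt C₀ / (r * s) := by
        have := add_le_add h1 h2
        linarith
    _ ≤ 20 * Real.sqrt C₀ / (r * s) := by
        have h3 : 8 * (Real.sqrt (2 * C₀) / s) / r = 8 * Real.sqrt (2 * C₀) / (r * s) := by
          ring
        rw [h3, hsqrt2C, ← add_div]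
        gcongr
        nlinarith [hsqrt2, Real.sqrt_nonneg C₀]

lemma II_bound {C₀ : ℝ} (hC₀ : 0 < C₀) : ∃ K : ℝ, 0 ≤ K ∧ ∀ r : ℝ, 0 ≤ r →
    ‖∫ t in (-C₀)..C₀, ee r t * (gg C₀ t : ℂ)‖
      ≤ K / ((1 + r) * Real.sqrt (1 + r)) := by
  set R : ℝ := max 1 (2 / C₀) with hR_def
  have hR1 : (1:ℝ) ≤ R := le_max_left _ _
  have hR2 : 2 / C₀ ≤ R := le_max_right _ _
  have hR0 : 0 < R := by linarith
  refine ⟨max (60 * Real.sqrt C₀) (4 * C₀ ^ 2 * ((1 + R) * Real.sqrt (1 + R))),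
    le_max_of_le_left (by positivity), ?_⟩
  intro r hr
  have h1r : (0:ℝ) < 1 + r := by linarith
  have hsr : 0 < Real.sqrt (1 + r) := Real.sqrt_pos.2 h1r
  by_cases hcase : r ≤ R
  · -- small r : trivial bound
    have htriv := trivial_bound hC₀ r (-C₀) C₀ (by linarith) (le_refl _) (le_refl _)
    have h4 : 2 * C₀ * (C₀ - -C₀) = 4 * C₀ ^ 2 := by ring
    rw [h4] at htriv
    have hmono : (1 + r) * Real.sqrt (1 + r) ≤ (1 + R) * Real.sqrt (1 + R) := by
      apply mul_le_mul (by linarith) (Real.sqrt_le_sqrt (by linarith)) hsr.le (by linarith)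
    rw [le_div_iff₀ (by positivity)]
    calc ‖∫ t in (-C₀)..C₀, ee r t * (gg C₀ t : ℂ)‖ * ((1 + r) * Real.sqrt (1 + r))
        ≤ (4 * C₀ ^ 2) * ((1 + R) * Real.sqrt (1 + R)) := by
          apply mul_le_mul htriv hmono (by positivity) (by positivity)
      _ ≤ max (60 * Real.sqrt C₀) (4 * C₀ ^ 2 * ((1 + R) * Real.sqrt (1 + R))) := by
          apply le_max_of_le_right; apply le_of_eq; ring
  · -- large r : decay bound
    push_neg at hcase
    have hr1 : 1 ≤ r := le_trans hR1 hcase.le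
    have hr2 : 2 / C₀ ≤ r := le_trans hR2 hcase.le
    have hr0 : (0:ℝ) < r := by linarith
    have hsr0 : 0 < Real.sqrt r := Real.sqrt_pos.2 hr0
    have hdec := decay_bound hC₀ hr1 hr2
    have hsqrt2 : Real.sqrt 2 ≤ 1.5 := by
      rw [show (1.5 : ℝ) = Real.sqrt (1.5 ^ 2) from (Real.sqrt_sq (by norm_num)).symm]
      apply Real.sqrt_le_sqrt; norm_num
    have hstep : 20 * Real.sqrt C₀ / (r * Real.sqrt r)
        ≤ 60 * Real.sqrt C₀ / ((1 + r) * Real.sqrt (1 + r)) := by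
      rw [div_le_div_iff₀ (by positivity) (by positivity)]
      have hs1 : Real.sqrt (1 + r) ≤ Real.sqrt 2 * Real.sqrt r := by
        rw [← Real.sqrt_mul (by norm_num : (0:ℝ) ≤ 2)]
        apply Real.sqrt_le_sqrt; linarith
      have hs2 : Real.sqrt (1 + r) ≤ 1.5 * Real.sqrt r := by
        calc Real.sqrt (1 + r) ≤ Real.sqrt 2 * Real.sqrt r := hs1
          _ ≤ 1.5 * Real.sqrt r := mul_le_mul_of_nonneg_right hsqrt2 hsr0.le
      have hkey : (1 + r) * Real.sqrt (1 + r) ≤ 3 * (r * Real.sqrt r) := by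
        calc (1 + r) * Real.sqrt (1 + r) ≤ (2 * r) * (1.5 * Real.sqrt r) := by
              apply mul_le_mul (by linarith) hs2 hsr.le (by positivity)
          _ = 3 * (r * Real.sqrt r) := by ring
      calc 20 * Real.sqrt C₀ * ((1 + r) * Real.sqrt (1 + r))
          ≤ 20 * Real.sqrt C₀ * (3 * (r * Real.sqrt r)) :=
            mul_le_mul_of_nonneg_left hkey (by positivity)
        _ = 60 * Real.sqrt C₀ * (r * Real.sqrt r) := by ring
    calc ‖∫ t in (-C₀)..C₀, ee r t * (gg C₀ t : ℂ)‖
        ≤ 20 * Real.sqrt C₀ / (r * Real.sqrt r) := hdec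
      _ ≤ 60 * Real.sqrt C₀ / ((1 + r) * Real.sqrt (1 + r)) := hstep
      _ ≤ max (60 * Real.sqrt C₀) (4 * C₀ ^ 2 * ((1 + R) * Real.sqrt (1 + R)))
            / ((1 + r) * Real.sqrt (1 + r)) := by
          gcongr
          exact le_max_left _ _

lemma sqrt_le_iff_sq {x C : ℝ} (hC : 0 ≤ C) (hx : 0 ≤ x) :
    Real.sqrt x ≤ C ↔ x ≤ C ^ 2 := by
  constructor
  · intro h1
    nlinarith [Real.sq_sqrt hx, Real.sqrt_nonneg x]
  · intro h1
    rw [show C = Real.sqrt (C ^ 2) from (Real.sqrt_sq hC).symm]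
    exact Real.sqrt_le_sqrt h1

lemma slice (C₀ : ℝ) (hC₀ : 0 < C₀) (h : ℝ → ℂ) (hh : Continuous h) (hb : ∀ t, ‖h t‖ ≤ 1) :
    (∫ ξ in Metric.closedBall (0 : EuclideanSpace ℝ (Fin 2)) C₀, h (ξ 0))
      = ∫ t in (-C₀)..C₀, h t * (gg C₀ t : ℂ) := by
  classical
  -- transfer to ℝ × ℝ
  set φ : EuclideanSpace ℝ (Fin 2) ≃ᵐ ℝ × ℝ :=
    (MeasurableEquiv.toLp 2 (Fin 2 → ℝ)).symm.trans MeasurableEquiv.finTwoArrow with hφ_def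
  have hφ : MeasurePreserving φ volume volume :=
    (volume_preserving_finTwoArrow ℝ).comp
      (EuclideanSpace.volume_preserving_symm_measurableEquiv_toLp (Fin 2))
  set S : Set (ℝ × ℝ) := {p : ℝ × ℝ | p.1 ^ 2 + p.2 ^ 2 ≤ C₀ ^ 2} with hS_def
  have hS : MeasurableSet S := by
    apply measurableSet_le <;> fun_prop
  have hpre : φ ⁻¹' S = Metric.closedBall (0 : EuclideanSpace ℝ (Fin 2)) C₀ := by
    ext ξ
    have hξ : φ ξ = (ξ 0, ξ 1) := rfl
    simp only [Set.mem_preimage, hξ, hS_def, Set.mem_setOf_eq, Metric.mem_closedBall,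
      dist_zero_right]
    rw [EuclideanSpace.norm_eq]
    rw [Fin.sum_univ_two]
    simp only [Real.norm_eq_abs, sq_abs]
    rw [sqrt_le_iff_sq hC₀.le (by positivity)]
  have step1 : (∫ ξ in Metric.closedBall (0 : EuclideanSpace ℝ (Fin 2)) C₀, h (ξ 0))
      = ∫ p in S, h p.1 := by
    rw [← hpre]
    exact hφ.setIntegral_preimage_emb φ.measurableEmbedding (fun p => h p.1) S
  rw [step1]
  -- Fubini
  have hSsub : S ⊆ Set.Icc (-C₀) C₀ ×ˢ Set.Icc (-C₀) C₀ := by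
    rintro ⟨p1, p2⟩ hp
    simp only [hS_def, Set.mem_setOf_eq] at hp
    constructor <;> constructor <;> nlinarith [sq_nonneg p1, sq_nonneg p2]
  have hSfin : volume S < ⊤ := by
    apply lt_of_le_of_lt (measure_mono hSsub)
    exact (isCompact_Icc.prod isCompact_Icc).measure_lt_top
  have hint : Integrable (S.indicator (fun p => h p.1)) (volume : Measure (ℝ × ℝ)) := by
    rw [integrable_indicator_iff hS]
    apply Measure.integrableOn_of_bounded hSfin.ne
    · exact (hh.comp continuous_fst).aestronglyMeasurable
    · exact Filter.Eventually.of_forall fun p => hb p.1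
  rw [← MeasureTheory.integral_indicator hS]
  have hint' : Integrable (S.indicator (fun p => h p.1))
      ((volume : Measure ℝ).prod (volume : Measure ℝ)) := by
    rwa [← Measure.volume_eq_prod]
  rw [show (volume : Measure (ℝ × ℝ)) = (volume : Measure ℝ).prod volume from rfl,
    MeasureTheory.integral_prod _ hint']
  -- inner integral
  have hinner : ∀ x : ℝ, (∫ y : ℝ, S.indicator (fun p => h p.1) (x, y))
      = (gg C₀ x : ℂ) * h x := by
    intro x
    have e1 : (fun y : ℝ => S.indicator (fun p => h p.1) (x, y))
        = Set.indicator {y : ℝ | y ^ 2 ≤ C₀ ^ 2 - x ^ 2} (fun _ => h x) := by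
      funext y
      simp only [Set.indicator, hS_def, Set.mem_setOf_eq]
      congr 1
      simp only [eq_iff_iff]
      constructor <;> intro <;> linarith
    rw [e1]
    have hT : MeasurableSet {y : ℝ | y ^ 2 ≤ C₀ ^ 2 - x ^ 2} := by
      apply measurableSet_le <;> fun_prop
    rw [MeasureTheory.integral_indicator hT, MeasureTheory.setIntegral_const]
    by_cases hc : 0 ≤ C₀ ^ 2 - x ^ 2
    · have hTeq : {y : ℝ | y ^ 2 ≤ C₀ ^ 2 - x ^ 2}
          = Set.Icc (-Real.sqrt (C₀ ^ 2 - x ^ 2)) (Real.sqrt (C₀ ^ 2 - x ^ 2)) := by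
        ext y
        simp only [Set.mem_setOf_eq, Set.mem_Icc, ← abs_le]
        rw [← Real.sqrt_sq_eq_abs, sqrt_le_iff_sq (Real.sqrt_nonneg _) (by positivity),
          Real.sq_sqrt hc]
      rw [hTeq, Real.volume_real_Icc]
      have : Real.sqrt (C₀ ^ 2 - x ^ 2) - -Real.sqrt (C₀ ^ 2 - x ^ 2)
          = 2 * Real.sqrt (C₀ ^ 2 - x ^ 2) := by ring
      rw [this, max_eq_left (by positivity)]
      rw [gg]
      push_cast
      rw [Complex.real_smul]
      norm_num
    · push_neg at hc
      have hTeq : {y : ℝ | y ^ 2 ≤ C₀ ^ 2 - x ^ 2} = (∅ : Set ℝ) := by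
        ext y
        simp only [Set.mem_setOf_eq, Set.mem_empty_iff_false, iff_false, not_le]
        nlinarith [sq_nonneg y]
      have hgg0 : gg C₀ x = 0 := by
        rw [gg, Real.sqrt_eq_zero_of_nonpos (by linarith)]
        ring
      rw [hTeq, hgg0]
      simp
  simp_rw [hinner]
  -- restrict to the interval
  have hvanish : ∀ x : ℝ, x ∉ Set.Ioc (-C₀) C₀ → (gg C₀ x : ℂ) * h x = 0 := by
    intro x hx
    simp only [Set.mem_Ioc, not_and_or, not_lt, not_le] at hx
    have hgg0 : gg C₀ x = 0 := by
      rw [gg, Real.sqrt_eq_zero_of_nonpos (by rcases hx with hx | hx <;> nlinarith)]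
      ring
    rw [hgg0]
    simp
  rw [← MeasureTheory.setIntegral_eq_integral_of_forall_compl_eq_zero hvanish,
    intervalIntegral.integral_of_le (by linarith : -C₀ ≤ C₀)]
  apply MeasureTheory.setIntegral_congr_fun measurableSet_Ioc
  intro t _
  ring

open scoped RealInnerProductSpace in
lemma rotate (C₀ : ℝ) (x : EuclideanSpace ℝ (Fin 2)) (hx : x ≠ 0) :
    (∫ ξ in Metric.closedBall (0 : EuclideanSpace ℝ (Fin 2)) C₀,
        Complex.exp (-((⟪x, ξ⟫ : ℝ) : ℂ) * Complex.I))
      = ∫ ξ in Metric.closedBall (0 : EuclideanSpace ℝ (Fin 2)) C₀, ee ‖x‖ (ξ 0) := by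
  classical
  set Ψ : ℂ ≃ₗᵢ[ℝ] EuclideanSpace ℝ (Fin 2) := Complex.orthonormalBasisOneI.repr with hΨ_def
  set z : ℂ := Ψ.symm x with hz_def
  have hz : z ≠ 0 := by
    simp only [hz_def, ne_eq, EmbeddingLike.map_eq_zero_iff]
    exact hx
  have hnz : ‖z‖ = ‖x‖ := by rw [hz_def, Ψ.symm.norm_map]
  have hnz0 : (0:ℝ) < ‖z‖ := norm_pos_iff.2 hz
  have hu_norm : ‖z / ‖z‖‖ = 1 := by
    rw [norm_div, Complex.norm_real, Real.norm_eq_abs, abs_of_pos hnz0, div_self hnz0.ne']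
  set u : Circle := ⟨z / ‖z‖, mem_sphere_zero_iff_norm.2 hu_norm⟩ with hu_def
  set Q : EuclideanSpace ℝ (Fin 2) ≃ₗᵢ[ℝ] EuclideanSpace ℝ (Fin 2) :=
    (Ψ.symm.trans (rotation u)).trans Ψ with hQ_def
  have hQ_apply : ∀ ξ, Q ξ = Ψ ((u : ℂ) * Ψ.symm ξ) := fun ξ => rfl
  have hkey : ∀ ξ : EuclideanSpace ℝ (Fin 2), ⟪x, Q ξ⟫ = ‖x‖ * (ξ 0) := by
    intro ξ
    have h1 : x = Ψ z := by rw [hz_def]; simp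
    rw [hQ_apply, h1, Ψ.inner_map_map]
    rw [Complex.inner]
    have hcz : ((‖z‖ : ℝ) : ℂ) ≠ 0 := by exact_mod_cast hnz0.ne'
    have hzz : (starRingEnd ℂ) z * z = ((‖z‖ : ℝ) : ℂ) ^ 2 := by
      rw [mul_comm, Complex.mul_conj]
      norm_cast
      rw [Complex.normSq_eq_norm_sq]
    have h2 : (starRingEnd ℂ) z * ((u : ℂ) * Ψ.symm ξ)
        = ((‖z‖ : ℝ) : ℂ) * (Ψ.symm ξ) := by
      have hu2 : (u : ℂ) = z / ‖z‖ := rfl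
      rw [hu2]
      calc (starRingEnd ℂ) z * (z / (‖z‖ : ℝ) * Ψ.symm ξ)
          = ((starRingEnd ℂ) z * z) * Ψ.symm ξ / ((‖z‖ : ℝ) : ℂ) := by ring
        _ = ((‖z‖ : ℝ) : ℂ) ^ 2 * Ψ.symm ξ / ((‖z‖ : ℝ) : ℂ) := by rw [hzz]
        _ = ((‖z‖ : ℝ) : ℂ) * Ψ.symm ξ := by
            rw [sq, mul_assoc, mul_div_cancel_left₀ _ hcz]
    rw [show (u : ℂ) * Ψ.symm ξ * (starRingEnd ℂ) z = (starRingEnd ℂ) z * ((u : ℂ) * Ψ.symm ξ) by ring, h2]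
    have h3 : Ψ.symm (ξ : EuclideanSpace ℝ (Fin 2)) = (ξ 0 : ℝ) + (ξ 1 : ℝ) * Complex.I := by
      rw [hΨ_def]
      exact Complex.orthonormalBasisOneI_repr_symm_apply ξ
    rw [h3, hnz]
    simp only [Complex.add_re, Complex.mul_re, Complex.add_im, Complex.mul_im,
      Complex.ofReal_re, Complex.ofReal_im, Complex.I_re, Complex.I_im]
    rw [Ψ.norm_map, hnz]
    ring
  -- change of variables
  have hQmp : MeasurePreserving Q volume volume := Q.measurePreserving
  have hQemb : MeasurableEmbedding (⇑Q) :=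
    Q.toHomeomorph.toMeasurableEquiv.measurableEmbedding
  have hball : ⇑Q ⁻¹' (Metric.closedBall (0 : EuclideanSpace ℝ (Fin 2)) C₀)
      = Metric.closedBall 0 C₀ := by
    ext ξ
    simp only [Set.mem_preimage, Metric.mem_closedBall, dist_zero_right]
    rw [Q.norm_map]
  have := hQmp.setIntegral_preimage_emb hQemb
    (fun ξ => Complex.exp (-((⟪x, ξ⟫ : ℝ) : ℂ) * Complex.I)) (Metric.closedBall 0 C₀)
  rw [hball] at this
  rw [← this]
  apply MeasureTheory.setIntegral_congr_fun (measurableSet_closedBall)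
  intro ξ _
  simp only
  rw [hkey ξ]
  rfl

open scoped RealInnerProductSpace in
lemma lemB {C₀ : ℝ} (hC₀ : 0 < C₀) (x : EuclideanSpace ℝ (Fin 2)) :
    (∫ ξ in Metric.closedBall (0 : EuclideanSpace ℝ (Fin 2)) C₀,
        Complex.exp (-((⟪x, ξ⟫ : ℝ) : ℂ) * Complex.I))
      = ∫ t in (-C₀)..C₀, ee ‖x‖ t * (gg C₀ t : ℂ) := by
  by_cases hx : x = 0
  · subst hx
    rw [show ‖(0 : EuclideanSpace ℝ (Fin 2))‖ = 0 from norm_zero]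
    rw [← slice C₀ hC₀ (ee 0) (continuous_ee 0) (fun t => le_of_eq (norm_ee 0 t))]
    apply MeasureTheory.setIntegral_congr_fun measurableSet_closedBall
    intro ξ _
    simp only [inner_zero_left, ee]
    norm_num
  · rw [rotate C₀ x hx]
    exact slice C₀ hC₀ (ee ‖x‖) (continuous_ee ‖x‖) (fun t => le_of_eq (norm_ee ‖x‖ t))

open scoped RealInnerProductSpace in
lemma continuous_integral_ball (C₀ : ℝ) :
    Continuous (fun x : EuclideanSpace ℝ (Fin 2) =>
      ∫ ξ in Metric.closedBall (0 : EuclideanSpace ℝ (Fin 2)) C₀,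
        Complex.exp (-((⟪x, ξ⟫ : ℝ) : ℂ) * Complex.I)) := by
  have key : Continuous (fun x : EuclideanSpace ℝ (Fin 2) =>
      ∫ ξ, (Metric.closedBall (0 : EuclideanSpace ℝ (Fin 2)) C₀).indicator
        (fun ξ => Complex.exp (-((⟪x, ξ⟫ : ℝ) : ℂ) * Complex.I)) ξ) := by
    apply MeasureTheory.continuous_of_dominated (bound := (Metric.closedBall
        (0 : EuclideanSpace ℝ (Fin 2)) C₀).indicator (fun _ => (1:ℝ)))
    · intro x
      apply AEStronglyMeasurable.indicator _ measurableSet_closedBall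
      apply Continuous.aestronglyMeasurable
      have h : Continuous fun ξ : EuclideanSpace ℝ (Fin 2) => (⟪x, ξ⟫ : ℝ) :=
        Continuous.inner continuous_const continuous_id
      exact Complex.continuous_exp.comp
        (((Complex.continuous_ofReal.comp h).neg).mul continuous_const)
    · intro x
      apply Filter.Eventually.of_forall
      intro ξ
      by_cases hξ : ξ ∈ Metric.closedBall (0 : EuclideanSpace ℝ (Fin 2)) C₀
      · rw [Set.indicator_of_mem hξ, Set.indicator_of_mem hξ]
        have : -((⟪x, ξ⟫ : ℝ) : ℂ) * Complex.I = ((-(⟪x, ξ⟫ : ℝ) : ℝ) : ℂ) * Complex.I := by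
          push_cast; ring
        rw [this, Complex.norm_exp_ofReal_mul_I]
      · rw [Set.indicator_of_notMem hξ, Set.indicator_of_notMem hξ]
        simp
    · rw [integrable_indicator_iff measurableSet_closedBall]
      exact integrableOn_const measure_closedBall_lt_top.ne
    · apply Filter.Eventually.of_forall
      intro ξ
      by_cases hξ : ξ ∈ Metric.closedBall (0 : EuclideanSpace ℝ (Fin 2)) C₀
      · simp only [Set.indicator_of_mem hξ]
        have h : Continuous fun x : EuclideanSpace ℝ (Fin 2) => (⟪x, ξ⟫ : ℝ) :=
          Continuous.inner continuous_id continuous_const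
        exact Complex.continuous_exp.comp
          (((Complex.continuous_ofReal.comp h).neg).mul continuous_const)
      · simp only [Set.indicator_of_notMem hξ]
        exact continuous_const
  simp_rw [MeasureTheory.integral_indicator measurableSet_closedBall] at key
  exact key

end S9

open scoped RealInnerProductSpace

/-- The inverse Fourier transform `u` of the indicator function of the closed
disc `{|ξ| ≤ C₀}` in `ℝ²` belongs to the weighted space `L²_σ(ℝ²)` for every
`σ < 1/2`, i.e. `∫ (1+|x|²)^σ |u(x)|² dx < ∞`. -/
theorem stmt9 (C₀ : ℝ) (hC₀ : 0 < C₀) (u : EuclideanSpace ℝ (Fin 2) → ℂ)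
    (hu : ∀ x, u x = (1 / (4 * (π : ℂ) ^ 2)) *
      ∫ ξ in Metric.closedBall (0 : EuclideanSpace ℝ (Fin 2)) C₀,
        Complex.exp (-((⟪x, ξ⟫ : ℝ) : ℂ) * Complex.I)) :
    ∀ σ : ℝ, σ < 1 / 2 →
      Integrable (fun x : EuclideanSpace ℝ (Fin 2) =>
        (1 + ‖x‖ ^ 2) ^ σ * ‖u x‖ ^ 2) volume := by
  intro σ hσ
  obtain ⟨K, hK0, hK⟩ := S9.II_bound hC₀
  set c : ℝ := 1 / (4 * π ^ 2) with hc_def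
  have hc0 : 0 < c := by rw [hc_def]; positivity
  have hnormc : ‖(1 / (4 * (π : ℂ) ^ 2))‖ = c := by
    have : (1 / (4 * (π : ℂ) ^ 2)) = ((c : ℝ) : ℂ) := by rw [hc_def]; push_cast; ring
    rw [this, Complex.norm_real, Real.norm_eq_abs, abs_of_pos hc0]
  -- pointwise bound
  have hupt : ∀ x : EuclideanSpace ℝ (Fin 2),
      ‖u x‖ ≤ c * K / ((1 + ‖x‖) * Real.sqrt (1 + ‖x‖)) := by
    intro x
    rw [hu x, S9.lemB hC₀ x, norm_mul, hnormc]
    have := hK ‖x‖ (norm_nonneg x)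
    calc c * ‖∫ t in (-C₀)..C₀, S9.ee ‖x‖ t * (S9.gg C₀ t : ℂ)‖
        ≤ c * (K / ((1 + ‖x‖) * Real.sqrt (1 + ‖x‖))) :=
          mul_le_mul_of_nonneg_left this hc0.le
      _ = c * K / ((1 + ‖x‖) * Real.sqrt (1 + ‖x‖)) := by ring
  -- continuity of u
  have hucont : Continuous u := by
    have : u = fun x => (1 / (4 * (π : ℂ) ^ 2)) *
        ∫ ξ in Metric.closedBall (0 : EuclideanSpace ℝ (Fin 2)) C₀,
          Complex.exp (-((⟪x, ξ⟫ : ℝ) : ℂ) * Complex.I) := funext hu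
    rw [this]
    exact continuous_const.mul (S9.continuous_integral_ball C₀)
  -- exponent bookkeeping
  set τ : ℝ := max σ 0 with hτ_def
  have hτ0 : 0 ≤ τ := le_max_right _ _
  have hτhalf : τ < 1 / 2 := by
    rw [hτ_def]
    apply max_lt hσ (by norm_num)
  have hexp : (2 : ℝ) < 3 - 2 * τ := by linarith
  -- the comparison function is integrable
  have hcomp : Integrable (fun x : EuclideanSpace ℝ (Fin 2) =>
      (c * K) ^ 2 * (1 + ‖x‖) ^ (-(3 - 2 * τ))) volume := by
    apply Integrable.const_mul
    apply integrable_one_add_norm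
    rw [finrank_euclideanSpace_fin]
    exact_mod_cast hexp
  -- pointwise comparison
  have key : ∀ x : EuclideanSpace ℝ (Fin 2),
      (1 + ‖x‖ ^ 2) ^ σ * ‖u x‖ ^ 2 ≤ (c * K) ^ 2 * (1 + ‖x‖) ^ (-(3 - 2 * τ)) := by
    intro x
    set r : ℝ := ‖x‖ with hr_def
    have hr0 : 0 ≤ r := norm_nonneg x
    have h1r : (0:ℝ) < 1 + r := by linarith
    have hA : (1 + r ^ 2) ^ σ ≤ (1 + r) ^ (2 * τ) := by
      have h1 : (1:ℝ) ≤ 1 + r ^ 2 := by nlinarith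
      calc (1 + r ^ 2) ^ σ ≤ (1 + r ^ 2) ^ τ :=
            Real.rpow_le_rpow_of_exponent_le h1 (le_max_left σ 0)
        _ ≤ ((1 + r) ^ (2:ℕ)) ^ τ := by
            apply Real.rpow_le_rpow (by positivity) (by nlinarith) hτ0
        _ = (1 + r) ^ (2 * τ) := by
            rw [← Real.rpow_natCast (1 + r) 2, ← Real.rpow_mul h1r.le]
            norm_num
    have hB : ‖u x‖ ^ 2 ≤ (c * K) ^ 2 * (1 + r) ^ (-(3:ℝ)) := by
      have hD := hupt x
      have hsq : ‖u x‖ ^ 2 ≤ (c * K / ((1 + r) * Real.sqrt (1 + r))) ^ 2 := by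
        apply pow_le_pow_left₀ (norm_nonneg _) hD
      have hden : ((1 + r) * Real.sqrt (1 + r)) ^ 2 = (1 + r) ^ (3:ℕ) := by
        rw [mul_pow, Real.sq_sqrt h1r.le]
        ring
      have hpow3 : (1 + r) ^ (-(3:ℝ)) = ((1 + r) ^ (3:ℕ))⁻¹ := by
        rw [Real.rpow_neg h1r.le, ← Real.rpow_natCast (1 + r) 3]
        norm_num
      calc ‖u x‖ ^ 2 ≤ (c * K / ((1 + r) * Real.sqrt (1 + r))) ^ 2 := hsq
        _ = (c * K) ^ 2 / ((1 + r) * Real.sqrt (1 + r)) ^ 2 := by rw [div_pow]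
        _ = (c * K) ^ 2 * ((1 + r) ^ (3:ℕ))⁻¹ := by rw [hden, div_eq_mul_inv]
        _ = (c * K) ^ 2 * (1 + r) ^ (-(3:ℝ)) := by rw [hpow3]
    calc (1 + r ^ 2) ^ σ * ‖u x‖ ^ 2
        ≤ (1 + r) ^ (2 * τ) * ((c * K) ^ 2 * (1 + r) ^ (-(3:ℝ))) := by
          apply mul_le_mul hA hB (by positivity) (by positivity)
      _ = (c * K) ^ 2 * ((1 + r) ^ (2 * τ) * (1 + r) ^ (-(3:ℝ))) := by ring
      _ = (c * K) ^ 2 * (1 + r) ^ (-(3 - 2 * τ)) := by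
          rw [← Real.rpow_add h1r]
          ring_nf
  -- conclude
  apply hcomp.mono'
  · apply Continuous.aestronglyMeasurable
    apply Continuous.mul
    · apply Continuous.rpow_const (by fun_prop)
      intro x
      left
      positivity
    · exact (hucont.norm.pow 2)
  · apply Filter.Eventually.of_forall
    intro x
    rw [Real.norm_eq_abs, abs_of_nonneg (by positivity)]
    exact key x

end
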